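/- arXiv:2207.11419 — 2 statements merged into one kernel-verified Lean document; each statement's English description precedes it below -/
import Mathlib

section
/- Let 1 < p < ∞ and let f ∈ L^p([0,1]) be cyclic for the Bishop operator T_α for every rational α ∈ (0,1). Then there exists a function ψ_f : ℕ → ℝ₊ with the following property: if α ∈ [0,1] is irrational with continued fraction convergents (p_n/q_n)_{n≥0}, and if for every n ≥ 0 there exists n₀ ≥ n such that q_{n₀+1} > ψ_f(q_{n₀}), then f is cyclic for T_α. -/
open MeasureTheory Set Filter Topology Polynomial
open scoped ENNReal NNReal

/-- Lebesgue measure restricted to `[0,1]`. -/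
noncomputable def μ01 : Measure ℝ := volume.restrict (Set.Icc 0 1)

/-- `T` is the Bishop operator `T_α` on `L^p([0,1])`, i.e.
`(T f)(x) = x · f({x + α})` for a.e. `x ∈ [0,1]`, where `{·}` is the fractional part. -/
def IsBishopOp (p : ℝ≥0∞) [Fact (1 ≤ p)] (α : ℝ)
    (T : Lp ℂ p μ01 →L[ℂ] Lp ℂ p μ01) : Prop :=
  ∀ f : Lp ℂ p μ01, ∀ᵐ x ∂μ01, (T f) x = (x : ℂ) * f (Int.fract (x + α))

/-- `T` is the weighted translation operator `T_{φ,α}` on `L^p([0,1])`, i.e.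
`(T f)(x) = φ(x) · f({x + α})` for a.e. `x ∈ [0,1]`. -/
def IsWTOp (p : ℝ≥0∞) [Fact (1 ≤ p)] (φ : ℝ → ℂ) (α : ℝ)
    (T : Lp ℂ p μ01 →L[ℂ] Lp ℂ p μ01) : Prop :=
  ∀ f : Lp ℂ p μ01, ∀ᵐ x ∂μ01, (T f) x = φ x * f (Int.fract (x + α))

namespace BishopAux

/-! ### The circle, the fractional-part shift, and measure preservation -/

noncomputable def Qc : AddCircle (1:ℝ) → ℝ :=
  fun y => ((AddCircle.equivIco 1 0 y : Set.Ico (0:ℝ) (0+1)) : ℝ)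

lemma Qc_coe (x : ℝ) : Qc ((x : AddCircle (1:ℝ))) = Int.fract x := by
  simp [Qc, AddCircle.coe_equivIco_mk_apply]

lemma measurable_Qc : Measurable Qc :=
  measurable_subtype_coe.comp (AddCircle.measurableEquivIco (T := 1) 0).measurable

lemma restrict_Ioc_eq_μ01 : volume.restrict (Ioc (0:ℝ) 1) = μ01 := by
  rw [μ01]
  exact Measure.restrict_congr_set Ioc_ae_eq_Icc

lemma mp_mk : MeasurePreserving (fun x : ℝ => (x : AddCircle (1:ℝ))) μ01 volume := by
  have h := AddCircle.measurePreserving_mk 1 0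
  rw [zero_add, restrict_Ioc_eq_μ01] at h
  exact h

lemma mp_Qc : MeasurePreserving Qc volume μ01 := by
  constructor
  · exact measurable_Qc
  · have h1 : Measure.map Qc (volume : Measure (AddCircle (1:ℝ)))
        = Measure.map (Qc ∘ (fun x : ℝ => (x : AddCircle (1:ℝ)))) (volume.restrict (Ioc (0:ℝ) 1)) := by
      rw [← Measure.map_map measurable_Qc (AddCircle.measurable_mk')]
      congr 1
      have := (AddCircle.measurePreserving_mk (T := 1) 0).map_eq
      rw [zero_add] at this
      rw [this]
    rw [h1]
    have h2 : (Qc ∘ (fun x : ℝ => (x : AddCircle (1:ℝ)))) =ᵐ[volume.restrict (Ioc (0:ℝ) 1)] id := by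
      have h3 : ∀ᵐ x ∂(volume.restrict (Ioc (0:ℝ) 1)), x ∈ Ioo (0:ℝ) 1 →
          (Qc ∘ (fun x : ℝ => (x : AddCircle (1:ℝ)))) x = id x := by
        filter_upwards with x hx
        simp only [Function.comp_apply, Qc_coe, id_eq]
        rw [Int.fract_eq_self.2 ⟨le_of_lt hx.1, hx.2⟩]
      have hnull : (volume.restrict (Ioc (0:ℝ) 1)) (Ioc (0:ℝ) 1 \ Ioo 0 1) = 0 := by
        rw [Measure.restrict_apply₀]
        · refine measure_mono_null (inter_subset_left) ?_
          have hss : Ioc (0:ℝ) 1 \ Ioo 0 1 ⊆ {1} := by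
            intro x hx
            rcases hx with ⟨⟨h0, h1⟩, h2⟩
            simp only [mem_Ioo, not_and, not_lt] at h2
            simp [le_antisymm h1 (h2 h0)]
          exact measure_mono_null hss (measure_singleton 1)
        · exact (measurableSet_Ioc.diff measurableSet_Ioo).nullMeasurableSet
      have hIoc : ∀ᵐ x ∂(volume.restrict (Ioc (0:ℝ) 1)), x ∈ Ioc (0:ℝ) 1 :=
        ae_restrict_mem measurableSet_Ioc
      have hnotbad : ∀ᵐ x ∂(volume.restrict (Ioc (0:ℝ) 1)), x ∉ (Ioc (0:ℝ) 1 \ Ioo 0 1) :=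
        (ae_iff.2 (by simpa using hnull))
      rw [Filter.EventuallyEq]
      filter_upwards [h3, hIoc, hnotbad] with x h hmem hbad
      exact h (by by_contra hc; exact hbad ⟨hmem, hc⟩)
    rw [Measure.map_congr h2, Measure.map_id, restrict_Ioc_eq_μ01]

lemma mp_cm (α : ℝ) :
    MeasurePreserving (fun x : ℝ => ((x + α : ℝ) : AddCircle (1:ℝ))) μ01 volume := by
  have he : (fun x : ℝ => ((x + α : ℝ) : AddCircle (1:ℝ)))
      = (fun y : AddCircle (1:ℝ) => y + (α : AddCircle (1:ℝ)))
        ∘ (fun x : ℝ => (x : AddCircle (1:ℝ))) := by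
    funext x; simp
  rw [he]
  exact (measurePreserving_add_right volume _).comp mp_mk

noncomputable def σf (α : ℝ) : ℝ → ℝ := fun x => Int.fract (x + α)

lemma σf_eq (α : ℝ) : σf α = Qc ∘ (fun x : ℝ => ((x + α : ℝ) : AddCircle (1:ℝ))) := by
  funext x
  simp only [σf, Function.comp_apply]
  exact (Qc_coe _).symm

lemma mp_σf (α : ℝ) : MeasurePreserving (σf α) μ01 μ01 := by
  rw [σf_eq]; exact mp_Qc.comp (mp_cm α)

/-! ### The Bishop operator as a continuous linear map -/

variable (p : ℝ≥0∞) [Fact (1 ≤ p)]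

lemma ae_abs_le_one : ∀ᵐ x ∂μ01, |x| ≤ 1 := by
  have h : ∀ᵐ x ∂μ01, x ∈ Icc (0:ℝ) 1 := by
    rw [μ01]; exact ae_restrict_mem measurableSet_Icc
  filter_upwards [h] with x hx
  rw [abs_of_nonneg hx.1]; exact hx.2

lemma memℒp_mul (h : Lp ℂ p μ01) : MemLp (fun x : ℝ => (x : ℂ) * h x) p μ01 := by
  refine (Lp.memLp h).of_le ?_ ?_
  · exact (Complex.continuous_ofReal.aestronglyMeasurable).mul (Lp.aestronglyMeasurable h)
  · filter_upwards [ae_abs_le_one] with x hx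
    rw [norm_mul, Complex.norm_real]
    exact mul_le_of_le_one_left (norm_nonneg _) hx

lemma eLpNorm_mul_le (h : ℝ → ℂ) :
    eLpNorm (fun x : ℝ => (x : ℂ) * h x) p μ01 ≤ eLpNorm h p μ01 := by
  refine eLpNorm_mono_ae ?_
  filter_upwards [ae_abs_le_one] with x hx
  rw [norm_mul, Complex.norm_real]
  exact mul_le_of_le_one_left (norm_nonneg _) hx

noncomputable def MopFun (h : Lp ℂ p μ01) : Lp ℂ p μ01 := (memℒp_mul p h).toLp _

lemma coeFn_MopFun (h : Lp ℂ p μ01) : MopFun p h =ᵐ[μ01] fun x : ℝ => (x : ℂ) * h x :=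
  MemLp.coeFn_toLp _

lemma norm_MopFun_le (h : Lp ℂ p μ01) : ‖MopFun p h‖ ≤ ‖h‖ := by
  rw [MopFun, Lp.norm_toLp, Lp.norm_def]
  exact ENNReal.toReal_mono (Lp.eLpNorm_ne_top h) (eLpNorm_mul_le p _)

noncomputable def Mop : Lp ℂ p μ01 →L[ℂ] Lp ℂ p μ01 :=
  LinearMap.mkContinuous
    { toFun := MopFun p
      map_add' := by
        intro g h
        refine Lp.ext ?_
        filter_upwards [coeFn_MopFun p (g + h), coeFn_MopFun p g, coeFn_MopFun p h,
          Lp.coeFn_add g h, Lp.coeFn_add (MopFun p g) (MopFun p h)] with x h1 h2 h3 h4 h5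
        rw [h5, Pi.add_apply, h1, h2, h3, h4, Pi.add_apply, mul_add]
      map_smul' := by
        intro c g
        refine Lp.ext ?_
        filter_upwards [coeFn_MopFun p (c • g), coeFn_MopFun p g,
          Lp.coeFn_smul c g, Lp.coeFn_smul c (MopFun p g)] with x h1 h2 h3 h4
        simp only [RingHom.id_apply]
        rw [h4, Pi.smul_apply, h1, h2, h3, Pi.smul_apply, smul_eq_mul, smul_eq_mul]
        ring }
    1 (fun h => by simpa using norm_MopFun_le p h)

lemma coeFn_Mop (h : Lp ℂ p μ01) : Mop p h =ᵐ[μ01] fun x : ℝ => (x : ℂ) * h x :=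
  coeFn_MopFun p h

lemma norm_Mop_le (h : Lp ℂ p μ01) : ‖Mop p h‖ ≤ ‖h‖ := norm_MopFun_le p h

noncomputable def Cop (α : ℝ) : Lp ℂ p μ01 →L[ℂ] Lp ℂ p μ01 :=
  (Lp.compMeasurePreservingₗᵢ ℂ (σf α) (mp_σf α)).toContinuousLinearMap

lemma coeFn_Cop (α : ℝ) (h : Lp ℂ p μ01) : Cop p α h =ᵐ[μ01] (h : ℝ → ℂ) ∘ (σf α) :=
  Lp.coeFn_compMeasurePreserving _ _

lemma norm_Cop (α : ℝ) (h : Lp ℂ p μ01) : ‖Cop p α h‖ = ‖h‖ :=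
  Lp.norm_compMeasurePreserving _ _

noncomputable def bishopOp (α : ℝ) : Lp ℂ p μ01 →L[ℂ] Lp ℂ p μ01 :=
  (Mop p).comp (Cop p α)

lemma coeFn_bishopOp (α : ℝ) (h : Lp ℂ p μ01) :
    bishopOp p α h =ᵐ[μ01] fun x : ℝ => (x : ℂ) * h (Int.fract (x + α)) := by
  have h1 := coeFn_Mop p (Cop p α h)
  have h2 := coeFn_Cop p α h
  have h3 : ∀ᵐ x : ℝ ∂μ01, (x:ℂ) * (Cop p α h) x = (x:ℂ) * h (Int.fract (x + α)) := by
    filter_upwards [h2] with x hx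
    rw [hx]; rfl
  filter_upwards [h1, h3] with x hx1 hx3
  exact hx1.trans hx3

lemma isBishopOp_bishopOp (α : ℝ) : IsBishopOp p α (bishopOp p α) :=
  fun h => coeFn_bishopOp p α h

lemma bishopOp_eq_of_isBishopOp {α : ℝ} {T : Lp ℂ p μ01 →L[ℂ] Lp ℂ p μ01}
    (hT : IsBishopOp p α T) : T = bishopOp p α := by
  refine ContinuousLinearMap.ext fun h => Lp.ext ?_
  filter_upwards [hT h, coeFn_bishopOp p α h] with x h1 h2
  rw [h1, h2]

lemma norm_bishopOp_sub (α a : ℝ) (h₁ h₂ : Lp ℂ p μ01) :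
    ‖bishopOp p α h₁ - bishopOp p a h₂‖
      ≤ ‖h₁ - h₂‖ + ‖Cop p α h₂ - Cop p a h₂‖ := by
  have e1 : bishopOp p α h₁ - bishopOp p a h₂
      = bishopOp p α (h₁ - h₂) + (Mop p) (Cop p α h₂ - Cop p a h₂) := by
    simp only [bishopOp, ContinuousLinearMap.comp_apply, map_sub]
    abel
  rw [e1]
  have b1 : ‖bishopOp p α (h₁ - h₂)‖ ≤ ‖h₁ - h₂‖ := by
    rw [bishopOp, ContinuousLinearMap.comp_apply]
    exact (norm_Mop_le p _).trans (le_of_eq (norm_Cop p α _))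
  have b2 : ‖(Mop p) (Cop p α h₂ - Cop p a h₂)‖ ≤ ‖Cop p α h₂ - Cop p a h₂‖ := norm_Mop_le p _
  exact (norm_add_le _ _).trans (add_le_add b1 b2)

/-! ### Strong continuity in the rotation parameter -/

instance : μ01.InnerRegularCompactLTTop :=
  inferInstanceAs ((volume.restrict (Set.Icc 0 1)).InnerRegularCompactLTTop)

noncomputable def cmF : C(ℝ × ℝ, AddCircle (1:ℝ)) :=
  ⟨fun q => ((q.2 + q.1 : ℝ) : AddCircle (1:ℝ)),
    (AddCircle.continuous_mk' 1).comp (continuous_snd.add continuous_fst)⟩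

noncomputable def cmC (α : ℝ) : C(ℝ, AddCircle (1:ℝ)) := cmF.curry α

lemma cmC_apply (α x : ℝ) : cmC α x = ((x + α : ℝ) : AddCircle (1:ℝ)) := rfl

lemma mp_cmC (α : ℝ) : MeasurePreserving (cmC α) μ01 volume := mp_cm α

noncomputable def Eop (h : Lp ℂ p μ01) : Lp ℂ p (volume : Measure (AddCircle (1:ℝ))) :=
  Lp.compMeasurePreserving Qc mp_Qc h

noncomputable def Dapp (h : Lp ℂ p μ01) (α : ℝ) : Lp ℂ p μ01 :=
  Lp.compMeasurePreserving (cmC α) (mp_cmC α) (Eop p h)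

lemma Dapp_continuous (hp' : p ≠ ∞) (h : Lp ℂ p μ01) : Continuous (Dapp p h) :=
  Continuous.compMeasurePreservingLp continuous_const (map_continuous cmF.curry) mp_cmC hp'

lemma Dapp_eq_Cop (h : Lp ℂ p μ01) (α : ℝ) : Dapp p h α = Cop p α h := by
  refine Lp.ext ?_
  have h1 : (Dapp p h α : ℝ → ℂ) =ᵐ[μ01] (Eop p h : AddCircle (1:ℝ) → ℂ) ∘ (cmC α) :=
    Lp.coeFn_compMeasurePreserving _ _
  have h2 : (Eop p h : AddCircle (1:ℝ) → ℂ) =ᵐ[volume] (h : ℝ → ℂ) ∘ Qc :=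
    Lp.coeFn_compMeasurePreserving _ _
  have h3 : ((Eop p h : AddCircle (1:ℝ) → ℂ) ∘ (cmC α)) =ᵐ[μ01] ((h : ℝ → ℂ) ∘ Qc) ∘ (cmC α) :=
    (mp_cmC α).quasiMeasurePreserving.ae_eq_comp h2
  have h4 : ((h : ℝ → ℂ) ∘ Qc) ∘ (cmC α) = (h : ℝ → ℂ) ∘ (σf α) := by
    funext x
    simp only [Function.comp_apply, cmC_apply, σf]
    rw [Qc_coe]
  refine h1.trans (h3.trans ?_)
  rw [h4]
  exact (coeFn_Cop p α h).symm

lemma cop_cont (hp' : p ≠ ∞) (h : Lp ℂ p μ01) (a : ℝ) {ε : ℝ} (hε : 0 < ε) :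
    ∃ δ : ℝ, 0 < δ ∧ ∀ α : ℝ, |α - a| < δ → ‖Cop p α h - Cop p a h‖ < ε := by
  have hc : ContinuousAt (Dapp p h) a := (Dapp_continuous p hp' h).continuousAt
  rw [Metric.continuousAt_iff] at hc
  rcases hc ε hε with ⟨δ, hδ, hd⟩
  refine ⟨δ, hδ, fun α hαa => ?_⟩
  have h5 := hd (x := α) (by rwa [Real.dist_eq])
  rwa [dist_eq_norm, Dapp_eq_Cop, Dapp_eq_Cop] at h5

lemma pow_cont (hp' : p ≠ ∞) (f : Lp ℂ p μ01) (i : ℕ) (a : ℝ) :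
    ∀ ε : ℝ, 0 < ε → ∃ δ : ℝ, 0 < δ ∧ ∀ α : ℝ, |α - a| < δ →
      ‖((bishopOp p α)^i) f - ((bishopOp p a)^i) f‖ < ε := by
  induction i with
  | zero =>
    intro ε hε
    refine ⟨1, one_pos, fun α _ => ?_⟩
    simp only [pow_zero, ContinuousLinearMap.one_apply, sub_self, norm_zero]
    exact hε
  | succ i ih =>
    intro ε hε
    obtain ⟨δ₁, hδ₁, h1⟩ := ih (ε/2) (half_pos hε)
    obtain ⟨δ₂, hδ₂, h2⟩ := cop_cont p hp' (((bishopOp p a)^i) f) a (half_pos hε)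
    refine ⟨min δ₁ δ₂, lt_min hδ₁ hδ₂, fun α hα => ?_⟩
    have e : ∀ β : ℝ, ((bishopOp p β)^(i+1)) f = bishopOp p β (((bishopOp p β)^i) f) := by
      intro β
      rw [pow_succ']
      rfl
    rw [e α, e a]
    have hb := norm_bishopOp_sub p α a (((bishopOp p α)^i) f) (((bishopOp p a)^i) f)
    have c1 := h1 α (hα.trans_le (min_le_left _ _))
    have c2 := h2 α (hα.trans_le (min_le_right _ _))
    calc ‖bishopOp p α (((bishopOp p α)^i) f) - bishopOp p a (((bishopOp p a)^i) f)‖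
        ≤ ‖((bishopOp p α)^i) f - ((bishopOp p a)^i) f‖
            + ‖Cop p α (((bishopOp p a)^i) f) - Cop p a (((bishopOp p a)^i) f)‖ := hb
      _ < ε/2 + ε/2 := by exact add_lt_add c1 c2
      _ = ε := add_halves ε

/-! ### Approximate cyclicity transfer -/

noncomputable def spanOrbit (f : Lp ℂ p μ01) (α : ℝ) : Set (Lp ℂ p μ01) :=
  (Submodule.span ℂ (Set.range fun n : ℕ => ((bishopOp p α)^n) f) : Submodule ℂ (Lp ℂ p μ01))

lemma exists_delta (hp' : p ≠ ∞) (f : Lp ℂ p μ01)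
    (hf : ∀ a : ℚ, (a : ℝ) ∈ Set.Ioo (0 : ℝ) 1 →
      ∀ T : Lp ℂ p μ01 →L[ℂ] Lp ℂ p μ01, IsBishopOp p (a : ℝ) T →
        Dense (Submodule.span ℂ (Set.range fun n : ℕ => (T ^ n) f) : Set (Lp ℂ p μ01)))
    (u : ℕ → Lp ℂ p μ01) (a : ℚ) (k m : ℕ) :
    ∃ δ : ℝ, 0 < δ ∧ ((a : ℝ) ∈ Set.Ioo (0:ℝ) 1 → ∀ α : ℝ, |α - (a:ℝ)| < δ →
      ∃ v ∈ spanOrbit p f α, ‖v - u k‖ < 1/(m+1)) := by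
  by_cases hmem : (a : ℝ) ∈ Set.Ioo (0:ℝ) 1
  · have hdense := hf a hmem (bishopOp p (a:ℝ)) (isBishopOp_bishopOp p (a:ℝ))
    have hcl : u k ∈ closure (spanOrbit p f (a:ℝ)) := hdense _
    have hhalf : (0:ℝ) < 1/(2*(m+1)) := by positivity
    rcases Metric.mem_closure_iff.1 hcl (1/(2*(m+1))) hhalf with ⟨w, hw, hwd⟩
    rcases Finsupp.mem_span_range_iff_exists_finsupp.1 hw with ⟨c, hc⟩
    set s := c.support with hs
    set B : ℝ := 1/(2*(m+1)*(s.card+1)) with hB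
    have hBpos : 0 < B := by rw [hB]; positivity
    have hchoice : ∀ i : ℕ, ∃ δ : ℝ, 0 < δ ∧ ∀ α : ℝ, |α - (a:ℝ)| < δ →
        ‖c i‖ * ‖((bishopOp p α)^i) f - ((bishopOp p (a:ℝ))^i) f‖ ≤ B := by
      intro i
      obtain ⟨δ, hδ, hd⟩ := pow_cont p hp' f i (a:ℝ) (B/(‖c i‖+1))
        (by positivity)
      refine ⟨δ, hδ, fun α hα => ?_⟩
      have h1 := hd α hα
      have h2 : (0:ℝ) ≤ ‖c i‖ := norm_nonneg _
      have h3 : ‖c i‖ * ‖((bishopOp p α)^i) f - ((bishopOp p (a:ℝ))^i) f‖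
          ≤ ‖c i‖ * (B/(‖c i‖+1)) := by
        exact mul_le_mul_of_nonneg_left (le_of_lt h1) h2
      refine h3.trans ?_
      have h4 : ‖c i‖ / (‖c i‖+1) ≤ 1 := by
        rw [div_le_one (by positivity)]; linarith
      calc ‖c i‖ * (B/(‖c i‖+1)) = (‖c i‖/(‖c i‖+1)) * B := by ring
        _ ≤ 1 * B := mul_le_mul_of_nonneg_right h4 hBpos.le
        _ = B := one_mul B
    choose δi hδipos hδiprop using hchoice
    set δ : ℝ := (insert 0 s).inf' (by simp) δi with hδdef
    have hδpos : 0 < δ := by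
      rw [hδdef]
      rw [Finset.lt_inf'_iff]
      intro i _
      exact hδipos i
    refine ⟨δ, hδpos, fun _ α hα => ?_⟩
    have hαi : ∀ i ∈ s, |α - (a:ℝ)| < δi i := by
      intro i hi
      refine hα.trans_le ?_
      rw [hδdef]
      exact Finset.inf'_le _ (Finset.mem_insert_of_mem hi)
    set v : Lp ℂ p μ01 := c.sum fun i cc => cc • (((bishopOp p α)^i) f) with hv
    have hvmem : v ∈ spanOrbit p f α := by
      rw [hv, Finsupp.sum]
      refine Submodule.sum_mem _ fun i _ => Submodule.smul_mem _ _ (Submodule.subset_span ⟨i, rfl⟩)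
    refine ⟨v, hvmem, ?_⟩
    have hvw : ‖v - w‖ ≤ s.card * B := by
      have he : v - w = ∑ i ∈ s, c i • (((bishopOp p α)^i) f - ((bishopOp p (a:ℝ))^i) f) := by
        rw [hv, ← hc, Finsupp.sum, Finsupp.sum, ← Finset.sum_sub_distrib]
        congr 1
        funext i
        rw [smul_sub]
      rw [he]
      refine (norm_sum_le _ _).trans ?_
      have hterm : ∀ i ∈ s, ‖c i • (((bishopOp p α)^i) f - ((bishopOp p (a:ℝ))^i) f)‖ ≤ B := by
        intro i hi
        rw [norm_smul]
        exact hδiprop i α (hαi i hi)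
      calc ∑ i ∈ s, ‖c i • (((bishopOp p α)^i) f - ((bishopOp p (a:ℝ))^i) f)‖
          ≤ ∑ _i ∈ s, B := Finset.sum_le_sum hterm
        _ = s.card * B := by rw [Finset.sum_const, nsmul_eq_mul]
    have hcard : (s.card : ℝ) * B < 1/(2*(m+1)) := by
      rw [hB]
      have h0 : (0:ℝ) < 2*((m:ℝ)+1) := by positivity
      have h1 : (0:ℝ) < (s.card:ℝ)+1 := by positivity
      have he2 : (s.card:ℝ) * (1/(2*((m:ℝ)+1)*((s.card:ℝ)+1)))
          = (s.card:ℝ)/((s.card:ℝ)+1) * (1/(2*((m:ℝ)+1))) := by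
        rw [one_div, mul_inv]
        ring
      rw [he2]
      have h2 : (s.card:ℝ)/((s.card:ℝ)+1) < 1 := by rw [div_lt_one h1]; linarith
      nlinarith [one_div_pos.2 h0]
    have hwu : ‖w - u k‖ < 1/(2*(m+1)) := by
      rw [← norm_sub_rev, ← dist_eq_norm]
      exact hwd
    have htri : ‖v - u k‖ ≤ ‖v - w‖ + ‖w - u k‖ := norm_sub_le_norm_sub_add_norm_sub v w (u k)
    have : ‖v - u k‖ < 1/(2*(m+1)) + 1/(2*(m+1)) := by
      refine htri.trans_lt ?_
      have := hvw.trans_lt hcard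
      exact add_lt_add this hwu
    refine this.trans_le (le_of_eq ?_)
    have hx : ((m:ℝ)+1) ≠ 0 := by positivity
    field_simp
    norm_num
  · exact ⟨1, one_pos, fun hmem' => absurd hmem' hmem⟩

/-! ### Continued fraction facts -/

lemma not_terminatedAt (α : ℝ) (hα : Irrational α) (n : ℕ) :
    ¬(GenContFract.of α).TerminatedAt n := by
  intro h
  have ht : (GenContFract.of α).Terminates := ⟨n, h⟩
  rcases (GenContFract.terminates_iff_rat α).1 ht with ⟨q, rfl⟩
  exact hα ⟨q, rfl⟩

lemma nums_int (α : ℝ) (hα : Irrational α) :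
    ∀ n : ℕ, ∃ z : ℤ, (GenContFract.of α).nums n = (z : ℝ) := by
  have key : ∀ n : ℕ, (∃ z : ℤ, (GenContFract.of α).nums n = (z:ℝ)) ∧
      (∃ z : ℤ, (GenContFract.of α).nums (n+1) = (z:ℝ)) := by
    intro n
    induction n with
    | zero =>
      constructor
      · exact ⟨⌊α⌋, by rw [GenContFract.zeroth_num_eq_h, GenContFract.of_h_eq_floor]⟩
      · obtain ⟨gp, hgp⟩ := Option.ne_none_iff_exists'.1 (not_terminatedAt α hα 0)
        obtain ⟨b, hb⟩ := GenContFract.exists_int_eq_of_partDen (GenContFract.partDen_eq_s_b hgp)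
        refine ⟨b * ⌊α⌋ + 1, ?_⟩
        rw [GenContFract.first_num_eq hgp, GenContFract.of_h_eq_floor, hb,
          GenContFract.of_partNum_eq_one (GenContFract.partNum_eq_s_a hgp)]
        push_cast; ring
    | succ n ih =>
      refine ⟨ih.2, ?_⟩
      obtain ⟨z1, hz1⟩ := ih.1
      obtain ⟨z2, hz2⟩ := ih.2
      obtain ⟨gp, hgp⟩ := Option.ne_none_iff_exists'.1 (not_terminatedAt α hα (n+1))
      obtain ⟨b, hb⟩ := GenContFract.exists_int_eq_of_partDen (GenContFract.partDen_eq_s_b hgp)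
      refine ⟨b * z2 + z1, ?_⟩
      rw [GenContFract.nums_recurrence hgp hz1 hz2, hb,
        GenContFract.of_partNum_eq_one (GenContFract.partNum_eq_s_a hgp)]
      push_cast; ring
  exact fun n => (key n).1

end BishopAux

open BishopAux

theorem cyclic_of_large_gaps_in_denominators (p : ℝ≥0∞) [Fact (1 ≤ p)]
    (hp : 1 < p) (hp' : p ≠ ∞) (f : Lp ℂ p μ01)
    (hf : ∀ a : ℚ, (a : ℝ) ∈ Set.Ioo (0 : ℝ) 1 →
      ∀ T : Lp ℂ p μ01 →L[ℂ] Lp ℂ p μ01, IsBishopOp p (a : ℝ) T →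
        Dense (Submodule.span ℂ (Set.range fun n : ℕ => (T ^ n) f) : Set (Lp ℂ p μ01))) :
    ∃ ψ : ℕ → ℝ, (∀ n, 0 ≤ ψ n) ∧
      ∀ α : ℝ, α ∈ Set.Icc (0 : ℝ) 1 → Irrational α →
        ∀ q : ℕ → ℕ, (∀ n, (q n : ℝ) = (GenContFract.of α).dens n) →
          (∀ n : ℕ, ∃ n₀, n ≤ n₀ ∧ (q (n₀ + 1) : ℝ) > ψ (q n₀)) →
          ∀ T : Lp ℂ p μ01 →L[ℂ] Lp ℂ p μ01, IsBishopOp p α T →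
            Dense (Submodule.span ℂ (Set.range fun n : ℕ => (T ^ n) f) :
              Set (Lp ℂ p μ01)) := by
  classical
  -- a dense sequence in Lp
  haveI : Fact (p ≠ ∞) := ⟨hp'⟩
  haveI : MeasureTheory.IsSeparable μ01 :=
    inferInstanceAs (MeasureTheory.IsSeparable (volume.restrict (Set.Icc 0 1)))
  haveI : SecondCountableTopology (Lp ℂ p μ01) := MeasureTheory.Lp.SecondCountableTopology
  obtain ⟨u, hu⟩ := TopologicalSpace.exists_dense_seq (Lp ℂ p μ01)
  -- the choice of δ's
  choose δch hδpos hδprop using fun (a : ℚ) (k m : ℕ) => exists_delta p hp' f hf u a k m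
  -- the function ψ
  set ψ : ℕ → ℝ := fun Q => 3 + ∑ i ∈ Finset.range (Q+1), ∑ j ∈ Finset.range (Q+1),
      ∑ k ∈ Finset.range (Q+1), ∑ m ∈ Finset.range (Q+1), (1 / δch ((i:ℚ)/(j:ℚ)) k m) with hψdef
  have hterm_nonneg : ∀ (a : ℚ) (k m : ℕ), 0 ≤ 1 / δch a k m :=
    fun a k m => le_of_lt (div_pos one_pos (hδpos a k m))
  have hψnonneg : ∀ n, 0 ≤ ψ n := by
    intro n
    rw [hψdef]
    have : (0:ℝ) ≤ ∑ i ∈ Finset.range (n+1), ∑ j ∈ Finset.range (n+1),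
        ∑ k ∈ Finset.range (n+1), ∑ m ∈ Finset.range (n+1), (1 / δch ((i:ℚ)/(j:ℚ)) k m) := by
      refine Finset.sum_nonneg fun i _ => Finset.sum_nonneg fun j _ =>
        Finset.sum_nonneg fun k _ => Finset.sum_nonneg fun m _ => hterm_nonneg _ _ _
    linarith
  have hψge : ∀ (Q : ℕ) (a : ℚ) (k m : ℕ), a.num.toNat ≤ Q → a.den ≤ Q → k ≤ Q → m ≤ Q →
      0 ≤ a.num → 1 / δch a k m ≤ ψ Q := by
    intro Q a k m hi hj hk hm hnum
    have hval : ((a.num.toNat : ℕ) : ℚ)/((a.den : ℕ) : ℚ) = a := by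
      have h1 : ((a.num.toNat : ℕ) : ℚ) = (a.num : ℚ) := by
        exact_mod_cast Int.toNat_of_nonneg hnum
      rw [h1, Rat.num_div_den]
    have hmem : ∀ x : ℕ, x ≤ Q → x ∈ Finset.range (Q+1) := fun x hx =>
      Finset.mem_range.2 (Nat.lt_succ_of_le hx)
    have s4 : 1 / δch a k m ≤ ∑ m' ∈ Finset.range (Q+1), 1 / δch a k m' :=
      Finset.single_le_sum (fun x _ => hterm_nonneg a k x) (hmem m hm)
    have s3 : ∑ m' ∈ Finset.range (Q+1), 1 / δch a k m'
        ≤ ∑ k' ∈ Finset.range (Q+1), ∑ m' ∈ Finset.range (Q+1), 1 / δch a k' m' :=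
      Finset.single_le_sum (s := Finset.range (Q+1)) (f := fun (k' : ℕ) => ∑ m' ∈ Finset.range (Q+1), 1 / δch a k' m')
        (fun x _ => Finset.sum_nonneg fun y _ => hterm_nonneg a x y) (hmem k hk)
    have s2 : ∑ k' ∈ Finset.range (Q+1), ∑ m' ∈ Finset.range (Q+1), 1 / δch a k' m'
        ≤ ∑ j' ∈ Finset.range (Q+1), ∑ k' ∈ Finset.range (Q+1), ∑ m' ∈ Finset.range (Q+1),
            1 / δch ((a.num.toNat : ℚ)/(j' : ℚ)) k' m' := by
      have := Finset.single_le_sum (s := Finset.range (Q+1))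
        (f := fun (j' : ℕ) => ∑ k' ∈ Finset.range (Q+1), ∑ m' ∈ Finset.range (Q+1),
            1 / δch ((a.num.toNat : ℚ)/(j' : ℚ)) k' m')
        (fun x _ => Finset.sum_nonneg fun y _ => Finset.sum_nonneg fun z _ => hterm_nonneg _ _ _)
        (hmem a.den hj)
      rw [hval] at this
      exact this
    have s1 : ∑ j' ∈ Finset.range (Q+1), ∑ k' ∈ Finset.range (Q+1), ∑ m' ∈ Finset.range (Q+1),
            1 / δch ((a.num.toNat : ℚ)/(j' : ℚ)) k' m'
        ≤ ∑ i' ∈ Finset.range (Q+1), ∑ j' ∈ Finset.range (Q+1), ∑ k' ∈ Finset.range (Q+1),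
            ∑ m' ∈ Finset.range (Q+1), 1 / δch ((i' : ℚ)/(j' : ℚ)) k' m' :=
      Finset.single_le_sum (s := Finset.range (Q+1))
        (f := fun (i' : ℕ) => ∑ j' ∈ Finset.range (Q+1), ∑ k' ∈ Finset.range (Q+1),
            ∑ m' ∈ Finset.range (Q+1), 1 / δch ((i' : ℚ)/(j' : ℚ)) k' m')
        (fun x _ => Finset.sum_nonneg fun y _ => Finset.sum_nonneg fun z _ =>
          Finset.sum_nonneg fun w _ => hterm_nonneg _ _ _)
        (hmem a.num.toNat hi)
    rw [hψdef]
    have := ((s4.trans s3).trans s2).trans s1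
    linarith
  refine ⟨ψ, hψnonneg, ?_⟩
  intro α hαIcc hαirr q hq hgap T hT
  rw [bishopOp_eq_of_isBishopOp p hT]
  -- basic facts about α and q
  have hα0 : 0 < α := by
    rcases hαIcc.1.lt_or_eq with h | h
    · exact h
    · exact absurd h.symm (by simpa using hαirr.ne_int 0)
  have hα1 : α < 1 := by
    rcases hαIcc.2.lt_or_eq with h | h
    · exact h
    · exact absurd h (by simpa using hαirr.ne_int 1)
  set ρ : ℝ := min α (1 - α) with hρdef
  have hρpos : 0 < ρ := lt_min hα0 (by linarith)
  have hnt := not_terminatedAt α hαirr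
  have hqmono : Monotone q := by
    refine monotone_nat_of_le_succ fun n => ?_
    have h1 : (q n : ℝ) ≤ (q (n+1) : ℝ) := by
      rw [hq n, hq (n+1)]
      exact GenContFract.of_den_mono
    exact_mod_cast h1
  have hq1 : ∀ n, 1 ≤ q n := by
    intro n
    have h1 : ((Nat.fib (n+1) : ℕ) : ℝ) ≤ (q n : ℝ) := by
      rw [hq n]
      exact GenContFract.succ_nth_fib_le_of_nth_den (Or.inr (hnt _))
    have h2 : 1 ≤ Nat.fib (n+1) := Nat.fib_pos.2 n.succ_pos
    have h3 : Nat.fib (n+1) ≤ q n := by exact_mod_cast h1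
    exact h2.trans h3
  have hunbdd : ∀ C : ℝ, ∃ n : ℕ, C < (q n : ℝ) := by
    intro C
    set N : ℕ := max 4 ⌈C⌉₊ with hN
    refine ⟨N, ?_⟩
    have h1 : ((Nat.fib (N+1) : ℕ) : ℝ) ≤ (q N : ℝ) := by
      rw [hq N]
      exact GenContFract.succ_nth_fib_le_of_nth_den (Or.inr (hnt _))
    have h2 : N + 1 ≤ Nat.fib (N+1) := Nat.le_fib_self (by omega)
    have h3 : C ≤ (⌈C⌉₊ : ℝ) := Nat.le_ceil C
    have h4 : (⌈C⌉₊ : ℝ) ≤ (N : ℝ) := by exact_mod_cast Nat.le_max_right 4 ⌈C⌉₊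
    have h5 : ((N:ℝ) + 1) ≤ ((Nat.fib (N+1) : ℕ) : ℝ) := by exact_mod_cast h2
    linarith
  -- density via the dense sequence
  rw [dense_iff_closure_eq]
  rw [Set.eq_univ_iff_forall]
  intro x
  have hxcl : x ∈ closure (Set.range u) := by
    rw [hu.closure_range]; trivial
  have hsub : closure (Set.range u) ⊆ closure (spanOrbit p f α) := by
    refine closure_minimal ?_ isClosed_closure
    rintro y ⟨j, rfl⟩
    -- show u j ∈ closure (spanOrbit p f α)
    rw [Metric.mem_closure_iff]
    intro ε hε
    obtain ⟨m, hm⟩ := exists_nat_one_div_lt hε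
    set C : ℝ := max (max (j:ℝ) (m:ℝ)) (1/ρ) with hC
    obtain ⟨n, hn⟩ := hunbdd C
    obtain ⟨n₀, hn₀ge, hgt⟩ := hgap n
    have hQC : C < (q n₀ : ℝ) := hn.trans_le (by exact_mod_cast hqmono hn₀ge)
    set Q : ℕ := q n₀ with hQ
    set Q' : ℕ := q (n₀+1) with hQ'
    have hQpos : (0:ℝ) < (Q:ℝ) := by
      have : (0:ℝ) < 1/ρ := by positivity
      have h2 : (1/ρ : ℝ) ≤ C := le_max_right _ _
      linarith
    have hQ'pos : (0:ℝ) < (Q':ℝ) := by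
      have : (1:ℕ) ≤ Q' := hq1 _
      exact_mod_cast this
    -- the rational convergent
    obtain ⟨z, hz⟩ := nums_int α hαirr n₀
    set a : ℚ := (z : ℚ)/(Q : ℚ) with ha
    have hacast : (a : ℝ) = (GenContFract.of α).convs n₀ := by
      rw [GenContFract.conv_eq_num_div_den, hz, ← hq n₀, ha]
      push_cast
      rfl
    have happrox : |α - (a:ℝ)| ≤ 1/((Q:ℝ)*(Q':ℝ)) := by
      rw [hacast]
      have := GenContFract.abs_sub_convs_le (v := α) (n := n₀) (hnt n₀)
      rwa [← hq n₀, ← hq (n₀+1)] at this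
    have hQQ' : 1/((Q:ℝ)*(Q':ℝ)) ≤ 1/(Q':ℝ) := by
      rw [div_le_div_iff₀ (by positivity) hQ'pos]
      have h1 : (1:ℝ) ≤ (Q:ℝ) := by
        have := hq1 n₀; exact_mod_cast this
      nlinarith
    have hQ'leQ : (Q:ℝ) ≤ (Q':ℝ) := by
      have := hqmono (Nat.le_succ n₀); exact_mod_cast this
    have hρQ : 1/(Q':ℝ) < ρ := by
      have h1 : (1/ρ : ℝ) < (Q:ℝ) := lt_of_le_of_lt (le_max_right _ _) hQC
      rw [div_lt_iff₀ hQ'pos]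
      have h2 : (1/ρ) < (Q':ℝ) := lt_of_lt_of_le h1 hQ'leQ
      rw [div_lt_iff₀ hρpos] at h2
      linarith [mul_comm ρ (Q':ℝ)]
    have hαa : |α - (a:ℝ)| < ρ := lt_of_le_of_lt (happrox.trans hQQ') hρQ
    -- a ∈ (0,1)
    have hamem : (a:ℝ) ∈ Set.Ioo (0:ℝ) 1 := by
      have h1 := abs_sub_lt_iff.1 hαa
      have h2 : ρ ≤ α := min_le_left _ _
      have h3 : ρ ≤ 1 - α := min_le_right _ _
      constructor
      · linarith [h1.1]
      · linarith [h1.2]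
    -- index bounds
    have ha0 : (0:ℚ) < a := by
      have : (0:ℝ) < (a:ℝ) := hamem.1
      exact_mod_cast this
    have ha1 : a < 1 := by
      have : (a:ℝ) < 1 := hamem.2
      exact_mod_cast this
    have hnum0 : 0 ≤ a.num := le_of_lt (Rat.num_pos.2 ha0)
    have hnumden : a.num < (a.den : ℤ) := Rat.lt_one_iff_num_lt_denom.2 ha1
    have hdenQ : a.den ≤ Q := by
      have hQposn : 0 < Q := hq1 n₀
      have hd : ((Rat.divInt z (Q:ℤ)).den : ℤ) ∣ (Q : ℤ) := Rat.den_dvd z (Q:ℤ)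
      rw [Rat.divInt_eq_div] at hd
      have heq : (((z:ℚ)) / (((Q:ℤ):ℚ))) = a := by rw [ha]; norm_cast
      rw [heq] at hd
      exact Nat.le_of_dvd hQposn (Int.ofNat_dvd.1 hd)
    have hnumQ : a.num.toNat ≤ Q := by
      have : a.num.toNat ≤ a.den := by
        rw [Int.toNat_le]
        exact le_of_lt hnumden
      exact this.trans hdenQ
    have hjQ : j ≤ Q := by
      have h1 : (j:ℝ) ≤ C := le_trans (le_max_left _ _) (le_max_left _ _)
      have : (j:ℝ) < (Q:ℝ) := h1.trans_lt hQC
      exact_mod_cast le_of_lt this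
    have hmQ : m ≤ Q := by
      have h1 : (m:ℝ) ≤ C := le_trans (le_max_right _ _) (le_max_left _ _)
      have : (m:ℝ) < (Q:ℝ) := h1.trans_lt hQC
      exact_mod_cast le_of_lt this
    -- the δ comparison
    have hψQ : 1 / δch a j m ≤ ψ Q := hψge Q a j m hnumQ hdenQ hjQ hmQ hnum0
    have hQ'gt : (1:ℝ) / δch a j m < (Q':ℝ) := lt_of_le_of_lt hψQ hgt
    have hδ : 0 < δch a j m := hδpos a j m
    have hfinal : 1/(Q':ℝ) < δch a j m := by
      rw [div_lt_iff₀ hQ'pos]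
      rw [div_lt_iff₀ hδ] at hQ'gt
      linarith [mul_comm (δch a j m) (Q':ℝ)]
    have hαδ : |α - (a:ℝ)| < δch a j m := lt_of_le_of_lt (happrox.trans hQQ') hfinal
    obtain ⟨v, hvmem, hvnorm⟩ := hδprop a j m hamem α hαδ
    refine ⟨v, hvmem, ?_⟩
    rw [dist_eq_norm, norm_sub_rev]
    exact hvnorm.trans (lt_of_le_of_lt (le_of_eq rfl) hm)
  exact hsub hxcl
end

section
/- Let φ ∈ L^∞([0,1]) be such that the Lebesgue measure of {x ∈ [0,1] : φ(x) = 0} is positive, let α ∈ [0,1] and let 1 < p < ∞. Then the weighted translation operator T_{φ,α} on L^p([0,1]) is not cyclic. -/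
open MeasureTheory Set Filter Topology Polynomial
open scoped ENNReal NNReal

instance : IsProbabilityMeasure μ01 := by
  constructor
  simp [μ01, Real.volume_Icc]

/-- Splitting a positive-measure subset of `[0,1]` into two positive-measure pieces. -/
lemma exists_split (S : Set ℝ) (hS1 : S ⊆ Set.Icc 0 1) (h : 0 < volume S) :
    ∃ c : ℝ, 0 < volume (S ∩ Set.Iic c) ∧ 0 < volume (S ∩ Set.Ioi c) := by
  by_contra hc
  push_neg at hc
  set P : Set ℝ := {c | 0 < volume (S ∩ Set.Iic c)} with hP
  set Q : Set ℝ := {c | 0 < volume (S ∩ Set.Ici c)} with hQ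
  have hPne : (1 : ℝ) ∈ P := by
    have : S ∩ Set.Iic 1 = S := Set.inter_eq_self_of_subset_left fun x hx => (hS1 hx).2
    simpa [hP, this] using h
  have hQne : (0 : ℝ) ∈ Q := by
    have : S ∩ Set.Ici 0 = S := Set.inter_eq_self_of_subset_left fun x hx => (hS1 hx).1
    simpa [hQ, this] using h
  have hPbdd : BddBelow P := by
    refine ⟨0, fun c hc' => ?_⟩
    by_contra hc0
    push_neg at hc0
    have : S ∩ Set.Iic c = ∅ := by
      ext x
      simp only [Set.mem_inter_iff, Set.mem_Iic, Set.mem_empty_iff_false, iff_false, not_and]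
      intro hx
      exact not_le.mpr (lt_of_lt_of_le hc0 (hS1 hx).1)
    simp [hP, this] at hc'
  have hQbdd : BddAbove Q := by
    refine ⟨1, fun c hc' => ?_⟩
    by_contra hc0
    push_neg at hc0
    have : S ∩ Set.Ici c = ∅ := by
      ext x
      simp only [Set.mem_inter_iff, Set.mem_Ici, Set.mem_empty_iff_false, iff_false, not_and]
      intro hx
      exact not_le.mpr (lt_of_le_of_lt (hS1 hx).2 hc0)
    simp [hQ, this] at hc'
  set c₀ := sInf P
  set d₀ := sSup Q
  have hPmono : ∀ {c c' : ℝ}, c ∈ P → c ≤ c' → c' ∈ P := by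
    intro c c' hcP hle
    exact lt_of_lt_of_le hcP
      (measure_mono (Set.inter_subset_inter_right _ (Set.Iic_subset_Iic.mpr hle)))
  rcases lt_or_ge c₀ d₀ with hlt | hle
  · set c := (c₀ + d₀) / 2 with hcdef
    have hc1 : c₀ < c := by rw [hcdef]; linarith
    have hc2 : c < d₀ := by rw [hcdef]; linarith
    obtain ⟨c', hc'P, hc'lt⟩ := exists_lt_of_csInf_lt ⟨1, hPne⟩ hc1
    have h1 : 0 < volume (S ∩ Set.Iic c) := hPmono hc'P hc'lt.le
    obtain ⟨d', hd'Q, hd'gt⟩ := exists_lt_of_lt_csSup ⟨0, hQne⟩ hc2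
    have h2 : 0 < volume (S ∩ Set.Ioi c) :=
      lt_of_lt_of_le hd'Q (measure_mono (Set.inter_subset_inter_right _
        (fun x hx => lt_of_lt_of_le hd'gt hx)))
    exact absurd h2 (by simpa using hc c h1)
  · have hIio : volume (S ∩ Set.Iio c₀) = 0 := by
      have hsub : S ∩ Set.Iio c₀ ⊆ ⋃ n : ℕ, S ∩ Set.Iic (c₀ - 1 / (n + 1)) := by
        rintro x ⟨hxS, hx⟩
        obtain ⟨n, hn⟩ := exists_nat_one_div_lt (K := ℝ) (sub_pos.mpr hx)
        exact Set.mem_iUnion.mpr ⟨n, hxS, by simp only [Set.mem_Iic]; linarith⟩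
      refine measure_mono_null hsub (measure_iUnion_null fun n => ?_)
      by_contra hn
      have hmem : c₀ - 1 / ((n:ℝ) + 1) ∈ P := pos_iff_ne_zero.mpr hn
      have hle' := csInf_le hPbdd hmem
      have hpos : (0:ℝ) < 1 / ((n:ℝ) + 1) := by positivity
      have : c₀ ≤ c₀ - 1 / ((n:ℝ) + 1) := hle'
      linarith
    have hIoi : volume (S ∩ Set.Ioi d₀) = 0 := by
      have hsub : S ∩ Set.Ioi d₀ ⊆ ⋃ n : ℕ, S ∩ Set.Ici (d₀ + 1 / (n + 1)) := by
        rintro x ⟨hxS, hx⟩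
        obtain ⟨n, hn⟩ := exists_nat_one_div_lt (K := ℝ) (sub_pos.mpr hx)
        exact Set.mem_iUnion.mpr ⟨n, hxS, by simp only [Set.mem_Ici]; linarith⟩
      refine measure_mono_null hsub (measure_iUnion_null fun n => ?_)
      by_contra hn
      have hmem : d₀ + 1 / ((n:ℝ) + 1) ∈ Q := pos_iff_ne_zero.mpr hn
      have hle' := le_csSup hQbdd hmem
      have hpos : (0:ℝ) < 1 / ((n:ℝ) + 1) := by positivity
      linarith
    have hsub : S ⊆ (S ∩ Set.Iio c₀) ∪ (S ∩ Set.Ioi d₀) ∪ {c₀} := by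
      intro x hx
      rcases lt_trichotomy x c₀ with h1 | h1 | h1
      · exact Or.inl (Or.inl ⟨hx, h1⟩)
      · exact Or.inr (by simp [h1])
      · exact Or.inl (Or.inr ⟨hx, lt_of_le_of_lt hle h1⟩)
    have hzero : volume S = 0 :=
      measure_mono_null hsub
        (measure_union_null (measure_union_null hIio hIoi) Real.volume_singleton)
    exact absurd hzero h.ne'

/-- Integration over a set as a continuous linear functional on `Lp ℂ p μ01`. -/
noncomputable def setIntCLM (p : ℝ≥0∞) [Fact (1 ≤ p)] (A : Set ℝ) :
    Lp ℂ p μ01 →L[ℂ] ℂ := by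
  have hp1 : (1 : ℝ≥0∞) ≤ p := Fact.out
  refine LinearMap.mkContinuous
    { toFun := fun g => ∫ x in A, g x ∂μ01
      map_add' := ?_
      map_smul' := ?_ } 1 ?_
  · intro g h
    have hg : Integrable g μ01 := (Lp.memLp g).integrable hp1
    have hh : Integrable h μ01 := (Lp.memLp h).integrable hp1
    have hcongr : ∀ᵐ x ∂μ01.restrict A, (g + h : Lp ℂ p μ01) x = g x + h x :=
      ae_restrict_of_ae (Lp.coeFn_add g h)
    show (∫ x in A, (g + h : Lp ℂ p μ01) x ∂μ01)
      = (∫ x in A, g x ∂μ01) + ∫ x in A, h x ∂μ01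
    rw [integral_congr_ae hcongr]
    exact integral_add hg.integrableOn hh.integrableOn
  · intro c g
    have hcongr : ∀ᵐ x ∂μ01.restrict A, (c • g : Lp ℂ p μ01) x = c • g x :=
      ae_restrict_of_ae (Lp.coeFn_smul c g)
    show (∫ x in A, (c • g : Lp ℂ p μ01) x ∂μ01) = c • ∫ x in A, g x ∂μ01
    rw [integral_congr_ae hcongr]
    simpa using integral_smul c (fun x => g x)
  · intro g
    have hg : Integrable g μ01 := (Lp.memLp g).integrable hp1
    have h1 : ‖∫ x in A, g x ∂μ01‖ ≤ ∫ x in A, ‖g x‖ ∂μ01 := norm_integral_le_integral_norm _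
    have h2 : ∫ x in A, ‖g x‖ ∂μ01 ≤ ∫ x, ‖g x‖ ∂μ01 :=
      setIntegral_le_integral hg.norm (Eventually.of_forall fun x => norm_nonneg _)
    have h3 : ∫ x, ‖g x‖ ∂μ01 = (eLpNorm g 1 μ01).toReal := by
      rw [eLpNorm_one_eq_lintegral_enorm, ← ofReal_integral_norm_eq_lintegral_enorm hg,
        ENNReal.toReal_ofReal (integral_nonneg fun x => norm_nonneg _)]
    have h4 : (eLpNorm g 1 μ01).toReal ≤ (eLpNorm g p μ01).toReal := by
      refine ENNReal.toReal_mono (Lp.eLpNorm_ne_top g) ?_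
      exact eLpNorm_le_eLpNorm_of_exponent_le hp1 (Lp.aestronglyMeasurable g)
    have h5 : (eLpNorm g p μ01).toReal = ‖g‖ := (Lp.norm_def g).symm
    calc ‖∫ x in A, g x ∂μ01‖ ≤ ∫ x in A, ‖g x‖ ∂μ01 := h1
      _ ≤ ∫ x, ‖g x‖ ∂μ01 := h2
      _ = (eLpNorm g 1 μ01).toReal := h3
      _ ≤ (eLpNorm g p μ01).toReal := h4
      _ = ‖g‖ := h5
      _ = 1 * ‖g‖ := (one_mul _).symm

@[simp] lemma setIntCLM_apply (p : ℝ≥0∞) [Fact (1 ≤ p)] (A : Set ℝ) (g : Lp ℂ p μ01) :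
    setIntCLM p A g = ∫ x in A, g x ∂μ01 := rfl

/-- If `φ ∈ L^∞([0,1])` is such that `{φ = 0}` has positive Lebesgue measure,
then for every `α ∈ [0,1]` and `1 < p < ∞` the weighted translation operator `T_{φ,α}`
on `L^p([0,1])` is not cyclic. -/
theorem weighted_translation_not_cyclic_of_zero_set (p : ℝ≥0∞) [Fact (1 ≤ p)]
    (hp : 1 < p) (hp' : p ≠ ∞)
    (φ : ℝ → ℂ) (hφ : MemLp φ ⊤ μ01) (hzero : 0 < μ01 {x | φ x = 0})
    (α : ℝ) (hα : α ∈ Set.Icc (0 : ℝ) 1)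
    (T : Lp ℂ p μ01 →L[ℂ] Lp ℂ p μ01) (hT : IsWTOp p φ α T) :
    ¬ ∃ f : Lp ℂ p μ01,
      Dense (Submodule.span ℂ (Set.range fun n : ℕ => (T ^ n) f) : Set (Lp ℂ p μ01)) := by
  rintro ⟨f, hf⟩
  -- choose a measurable representative ψ of φ
  obtain ⟨ψ, hψm, hψ⟩ := hφ.aestronglyMeasurable
  -- the zero set of ψ has positive μ01-measure
  have hZmeas : MeasurableSet {x | ψ x = 0} := hψm.measurable (measurableSet_singleton 0)
  have hZpos : 0 < μ01 {x | ψ x = 0} := by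
    by_contra hle
    push_neg at hle
    have hz : μ01 {x | ψ x = 0} = 0 := le_antisymm (le_of_not_gt (by simpa using hle)) zero_le
    have hsub : {x | φ x = 0} ⊆ {x | ψ x = 0} ∪ {x | φ x ≠ ψ x} := by
      intro x hx
      by_cases hxe : φ x = ψ x
      · exact Or.inl (by simp only [Set.mem_setOf_eq, ← hxe]; exact hx)
      · exact Or.inr hxe
    have : μ01 {x | φ x = 0} = 0 :=
      measure_mono_null hsub (measure_union_null hz hψ)
    exact absurd this hzero.ne'
  -- work inside [0,1]
  set S : Set ℝ := {x | ψ x = 0} ∩ Set.Icc 0 1 with hSdef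
  have hSmeas : MeasurableSet S := hZmeas.inter measurableSet_Icc
  have hSvol : 0 < volume S := by
    have : μ01 {x | ψ x = 0} = volume S := Measure.restrict_apply hZmeas
    rwa [this] at hZpos
  obtain ⟨c, hA, hB⟩ := exists_split S (fun x hx => hx.2) hSvol
  set A : Set ℝ := S ∩ Set.Iic c with hAdef
  set B : Set ℝ := S ∩ Set.Ioi c with hBdef
  have hAmeas : MeasurableSet A := hSmeas.inter measurableSet_Iic
  have hBmeas : MeasurableSet B := hSmeas.inter measurableSet_Ioi
  have hAsub : A ⊆ Set.Icc 0 1 := fun x hx => hx.1.2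
  have hBsub : B ⊆ Set.Icc 0 1 := fun x hx => hx.1.2
  have hμA : μ01 A = volume A := by
    rw [μ01, Measure.restrict_apply hAmeas, Set.inter_eq_self_of_subset_left hAsub]
  have hμB : μ01 B = volume B := by
    rw [μ01, Measure.restrict_apply hBmeas, Set.inter_eq_self_of_subset_left hBsub]
  have hμApos : 0 < μ01 A := by rwa [hμA]
  have hμBpos : 0 < μ01 B := by rwa [hμB]
  have hμAne : μ01 A ≠ ∞ := (measure_lt_top μ01 A).ne
  have hμBne : μ01 B ≠ ∞ := (measure_lt_top μ01 B).ne
  -- the two functionals and the combined map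
  set ΛA := setIntCLM p A
  set ΛB := setIntCLM p B
  set L : Lp ℂ p μ01 →L[ℂ] ℂ × ℂ := ΛA.prod ΛB with hLdef
  -- T g integrates to zero over A and over B
  have hTA : ∀ g : Lp ℂ p μ01, ∀ D : Set ℝ, MeasurableSet D → D ⊆ S →
      (∫ x in D, (T g) x ∂μ01) = 0 := by
    intro g D hDmeas hDsub
    have h1 : ∀ᵐ x ∂μ01.restrict D, (T g) x = φ x * g (Int.fract (x + α)) :=
      ae_restrict_of_ae (hT g)
    have h2 : ∀ᵐ x ∂μ01.restrict D, φ x = ψ x := ae_restrict_of_ae hψ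
    have h3 : ∀ᵐ x ∂μ01.restrict D, x ∈ D := ae_restrict_mem hDmeas
    have hzero' : ∀ᵐ x ∂μ01.restrict D, (T g) x = 0 := by
      filter_upwards [h1, h2, h3] with x e1 e2 e3
      have : ψ x = 0 := (hDsub e3).1
      rw [e1, e2, this, zero_mul]
    rw [integral_congr_ae hzero', integral_zero]
  -- the closed subspace containing the orbit
  set v : ℂ × ℂ := L f with hvdef
  set W : Submodule ℂ (Lp ℂ p μ01) :=
    Submodule.comap (L : Lp ℂ p μ01 →ₗ[ℂ] ℂ × ℂ) (Submodule.span ℂ {v}) with hWdef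
  have hWclosed : IsClosed (W : Set (Lp ℂ p μ01)) := by
    have h1 : IsClosed ((Submodule.span ℂ {v} : Submodule ℂ (ℂ × ℂ)) : Set (ℂ × ℂ)) :=
      (Submodule.span ℂ {v}).closed_of_finiteDimensional
    exact h1.preimage L.continuous
  have horbit : Set.range (fun n : ℕ => (T ^ n) f) ⊆ (W : Set (Lp ℂ p μ01)) := by
    rintro - ⟨n, rfl⟩
    cases n with
    | zero =>
      simp only [pow_zero, ContinuousLinearMap.one_apply]
      exact Submodule.mem_span_singleton_self v
    | succ n =>
      have hmem : (T ^ (n + 1)) f = T ((T ^ n) f) := by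
        rw [pow_succ']
        rfl
      show L ((T ^ (n + 1)) f) ∈ Submodule.span ℂ {v}
      have hLzero : L ((T ^ (n + 1)) f) = 0 := by
        rw [hmem]
        have e1 : ΛA (T ((T ^ n) f)) = 0 := hTA _ A hAmeas fun x hx => hx.1
        have e2 : ΛB (T ((T ^ n) f)) = 0 := hTA _ B hBmeas fun x hx => hx.1
        rw [hLdef, ContinuousLinearMap.prod_apply, e1, e2]; rfl
      rw [hLzero]
      exact Submodule.zero_mem _
  have hspan : (Submodule.span ℂ (Set.range fun n : ℕ => (T ^ n) f) : Set (Lp ℂ p μ01))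
      ⊆ (W : Set (Lp ℂ p μ01)) := Submodule.span_le.mpr horbit
  have hall : ∀ g : Lp ℂ p μ01, L g ∈ Submodule.span ℂ ({v} : Set (ℂ × ℂ)) := by
    intro g
    have : g ∈ closure (Submodule.span ℂ (Set.range fun n : ℕ => (T ^ n) f)
        : Set (Lp ℂ p μ01)) := by rw [hf.closure_eq]; trivial
    have hgW : g ∈ (W : Set (Lp ℂ p μ01)) :=
      closure_minimal hspan hWclosed this
    exact hgW
  -- evaluate on the indicator functions of A and B
  set eA : Lp ℂ p μ01 := indicatorConstLp p hAmeas hμAne (1 : ℂ) with heA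
  set eB : Lp ℂ p μ01 := indicatorConstLp p hBmeas hμBne (1 : ℂ) with heB
  have hAB : ∀ (D E : Set ℝ), MeasurableSet E → Disjoint D E →
      ∀ (hD : MeasurableSet D) (hDne : μ01 D ≠ ∞),
      (∫ x in E, (indicatorConstLp p hD hDne (1 : ℂ) : Lp ℂ p μ01) x ∂μ01) = 0 := by
    intro D E hEmeas hdisj hD hDne
    have h1 : ∀ᵐ x ∂μ01.restrict E,
        (indicatorConstLp p hD hDne (1 : ℂ) : Lp ℂ p μ01) x = D.indicator (fun _ => (1:ℂ)) x :=
      ae_restrict_of_ae indicatorConstLp_coeFn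
    have h3 : ∀ᵐ x ∂μ01.restrict E, x ∈ E := ae_restrict_mem hEmeas
    have hzero' : ∀ᵐ x ∂μ01.restrict E,
        (indicatorConstLp p hD hDne (1 : ℂ) : Lp ℂ p μ01) x = 0 := by
      filter_upwards [h1, h3] with x e1 e3
      rw [e1, Set.indicator_of_notMem (Set.disjoint_right.mp hdisj e3)]
    rw [integral_congr_ae hzero', integral_zero]
  have hself : ∀ (D : Set ℝ) (hD : MeasurableSet D) (hDne : μ01 D ≠ ∞),
      (∫ x in D, (indicatorConstLp p hD hDne (1 : ℂ) : Lp ℂ p μ01) x ∂μ01)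
        = ((μ01 D).toReal : ℂ) := by
    intro D hD hDne
    have h1 : ∀ᵐ x ∂μ01.restrict D,
        (indicatorConstLp p hD hDne (1 : ℂ) : Lp ℂ p μ01) x = D.indicator (fun _ => (1:ℂ)) x :=
      ae_restrict_of_ae indicatorConstLp_coeFn
    have h3 : ∀ᵐ x ∂μ01.restrict D, x ∈ D := ae_restrict_mem hD
    have hone : ∀ᵐ x ∂μ01.restrict D,
        (indicatorConstLp p hD hDne (1 : ℂ) : Lp ℂ p μ01) x = 1 := by
      filter_upwards [h1, h3] with x e1 e3
      rw [e1, Set.indicator_of_mem e3]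
    rw [integral_congr_ae hone, setIntegral_const]
    simp [Complex.real_smul, measureReal_def]
  have hdisjAB : Disjoint A B := by
    refine Set.disjoint_left.mpr ?_
    rintro x ⟨-, hx1⟩ ⟨-, hx2⟩
    exact absurd (Set.mem_Ioi.mp hx2) (not_lt.mpr hx1)
  have hLA : L eA = (((μ01 A).toReal : ℂ), 0) := by
    have e1 : ΛA eA = ((μ01 A).toReal : ℂ) := hself A hAmeas hμAne
    have e2 : ΛB eA = 0 := hAB A B hBmeas hdisjAB hAmeas hμAne
    simp [hLdef, ContinuousLinearMap.prod_apply, e1, e2]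
  have hLB : L eB = (0, ((μ01 B).toReal : ℂ)) := by
    have e1 : ΛA eB = 0 := hAB B A hAmeas hdisjAB.symm hBmeas hμBne
    have e2 : ΛB eB = ((μ01 B).toReal : ℂ) := hself B hBmeas hμBne
    simp [hLdef, ContinuousLinearMap.prod_apply, e1, e2]
  have hApos' : ((μ01 A).toReal : ℂ) ≠ 0 := by
    simp only [ne_eq, Complex.ofReal_eq_zero]
    exact (ENNReal.toReal_pos hμApos.ne' hμAne).ne'
  have hBpos' : ((μ01 B).toReal : ℂ) ≠ 0 := by
    simp only [ne_eq, Complex.ofReal_eq_zero]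
    exact (ENNReal.toReal_pos hμBpos.ne' hμBne).ne'
  obtain ⟨a, ha⟩ := Submodule.mem_span_singleton.mp (hall eA)
  obtain ⟨b, hb⟩ := Submodule.mem_span_singleton.mp (hall eB)
  rw [hLA] at ha
  rw [hLB] at hb
  have ha1 : a * v.1 = ((μ01 A).toReal : ℂ) := congrArg Prod.fst ha
  have ha2 : a * v.2 = 0 := congrArg Prod.snd ha
  have hb2 : b * v.2 = ((μ01 B).toReal : ℂ) := congrArg Prod.snd hb
  have hane : a ≠ 0 := by
    intro h0
    rw [h0, zero_mul] at ha1
    exact hApos' ha1.symm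
  have hv2 : v.2 = 0 := by
    rcases mul_eq_zero.mp ha2 with h | h
    · exact absurd h hane
    · exact h
  rw [hv2, mul_zero] at hb2
  exact hBpos' hb2.symm
end
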